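/- For every positive integer m and every positive integer q, the number of pairs (i, j) of nonnegative integers with j ≤ q − 1 and q·i + (q+1)·j < m is at least m − q(q−1)/2. -/

import Mathlib

/-- key: for good `s`, the canonical representation. -/
lemma stmt0_key (q s : ℕ) (hq : 0 < q) (hs : (q + 1) * (s % q) ≤ s) :
    q * (s / q - s % q) + (q + 1) * (s % q) = s := by
  have hdm : q * (s / q) + s % q = s := Nat.div_add_mod s q
  have hexp : (q + 1) * (s % q) = q * (s % q) + s % q := by ring
  have hle : q * (s % q) ≤ q * (s / q) := by omega
  have hle' : s % q ≤ s / q := Nat.le_of_mul_le_mul_left hle hq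
  have h2 : s / q = (s / q - s % q) + s % q := (Nat.sub_add_cancel hle').symm
  rw [h2, Nat.mul_add] at hdm
  omega

/-- For every positive integer `m` and every positive integer `q`, the number of pairs
`(i, j)` of nonnegative integers with `j ≤ q - 1` and `q*i + (q+1)*j < m` is at least
`m - q*(q-1)/2`. -/
theorem stmt_0 (m q : ℕ) (hm : 0 < m) (hq : 0 < q) :
    m - q * (q - 1) / 2 ≤
      Set.ncard {ij : ℕ × ℕ | ij.2 ≤ q - 1 ∧ q * ij.1 + (q + 1) * ij.2 < m} := by
  classical
  set F := (Finset.range m ×ˢ Finset.range q).filter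
      (fun ij => ij.2 ≤ q - 1 ∧ q * ij.1 + (q + 1) * ij.2 < m) with hF
  have hSF : {ij : ℕ × ℕ | ij.2 ≤ q - 1 ∧ q * ij.1 + (q + 1) * ij.2 < m} = ↑F := by
    ext ⟨i, j⟩
    simp only [hF, Finset.coe_filter, Finset.mem_product, Finset.mem_range, Set.mem_setOf_eq]
    constructor
    · rintro ⟨h1, h2⟩
      refine ⟨⟨?_, by omega⟩, h1, h2⟩
      calc i ≤ q * i := Nat.le_mul_of_pos_left _ hq
        _ ≤ q * i + (q + 1) * j := Nat.le_add_right _ _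
        _ < m := h2
    · rintro ⟨_, h⟩; exact h
  rw [hSF, Set.ncard_coe_finset]
  set T := (Finset.range m).filter (fun s => (q + 1) * (s % q) ≤ s) with hT
  set G := (Finset.range m).filter (fun s => ¬ (q + 1) * (s % q) ≤ s) with hG
  have hTG : T.card + G.card = m := by
    rw [hT, hG, Finset.card_filter_add_card_filter_not, Finset.card_range]
  -- bound gaps
  have hGcard : G.card ≤ q * (q - 1) / 2 := by
    have hsub : G ⊆ (Finset.range q).biUnion
        (fun r => (Finset.range r).image (fun k => q * k + r)) := by
      intro s hs
      simp only [hG, Finset.mem_filter, Finset.mem_range] at hs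
      obtain ⟨hsm, hbad⟩ := hs
      push_neg at hbad
      have hdm : q * (s / q) + s % q = s := Nat.div_add_mod s q
      have hexp : (q + 1) * (s % q) = q * (s % q) + s % q := by ring
      have hklt : s / q < s % q := by
        have : q * (s / q) < q * (s % q) := by omega
        exact Nat.lt_of_mul_lt_mul_left this
      simp only [Finset.mem_biUnion, Finset.mem_range, Finset.mem_image]
      exact ⟨s % q, Nat.mod_lt s hq, s / q, hklt, hdm⟩
    calc G.card ≤ _ := Finset.card_le_card hsub
      _ ≤ ∑ r ∈ Finset.range q, ((Finset.range r).image (fun k => q * k + r)).card :=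
        Finset.card_biUnion_le
      _ ≤ ∑ r ∈ Finset.range q, r := by
        refine Finset.sum_le_sum fun r _ => ?_
        calc ((Finset.range r).image (fun k => q * k + r)).card
            ≤ (Finset.range r).card := Finset.card_image_le
          _ = r := Finset.card_range r
      _ = q * (q - 1) / 2 := Finset.sum_range_id q
  -- injection from T into F
  have hTF : T.card ≤ F.card := by
    apply Finset.card_le_card_of_injOn (fun s => (s / q - s % q, s % q))
    · intro s hs
      simp only [Finset.mem_coe, hT, Finset.mem_filter, Finset.mem_range] at hs
      obtain ⟨hsm, hgood⟩ := hs
      have hkey := stmt0_key q s hq hgood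
      have hle : s / q - s % q ≤ q * (s / q - s % q) := Nat.le_mul_of_pos_left _ hq
      have hi : s / q - s % q < m := by
        have h1 : q * (s / q - s % q) ≤ s :=
          le_trans (Nat.le_add_right _ _) hkey.le
        exact lt_of_le_of_lt (le_trans hle h1) hsm
      have hj : s % q < q := Nat.mod_lt s hq
      simp only [Finset.mem_coe, hF, Finset.mem_filter, Finset.mem_product, Finset.mem_range]
      exact ⟨⟨hi, hj⟩, by omega, by rw [hkey]; exact hsm⟩
    · intro s1 h1 s2 h2 heq
      simp only [Finset.mem_coe, hT, Finset.mem_filter, Finset.mem_range] at h1 h2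
      have k1 := stmt0_key q s1 hq h1.2
      have k2 := stmt0_key q s2 hq h2.2
      have e1 : s1 / q - s1 % q = s2 / q - s2 % q := congrArg Prod.fst heq
      have e2 : s1 % q = s2 % q := congrArg Prod.snd heq
      rw [← k1, ← k2, e1, e2]
  omega
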